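/- Let k ≥ 2 be an integer, m an integer with m ≥ 2¹¹·k⁴, and x ∈ ℝⁿ with 0 ≤ x_i ≤ 1/5 for all i and Σ_i x_i ≤ k. Assign each index i ∈ {1,…,n} independently and uniformly at random to one of m buckets. Then the probability that some bucket b satisfies Σ_{i assigned to b} x_i > 4/5 is at most 1/m. -/

import Mathlib

open MeasureTheory ProbabilityTheory
open scoped ENNReal

namespace Statement9Aux

/-- Nested "elementary-symmetric-like" sum:
`nest y r S = ∑ distinct tuples (i₁,…,i_r) from S, y i₁ ⋯ y i_r`. -/
def nest {n : ℕ} {R : Type*} [CommSemiring R] (y : Fin n → R) : ℕ → Finset (Fin n) → R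
  | 0, _ => 1
  | r + 1, S => ∑ i ∈ S, y i * nest y r (S.erase i)

lemma nest_nonneg {n : ℕ} {y : Fin n → ℝ} (hy : ∀ i, 0 ≤ y i) :
    ∀ (r : ℕ) (S : Finset (Fin n)), 0 ≤ nest y r S
  | 0, _ => by simp [nest]
  | r + 1, S =>
    Finset.sum_nonneg fun i _ => mul_nonneg (hy i) (nest_nonneg hy r _)

lemma nest_lower {n : ℕ} {y : Fin n → ℝ} (hy0 : ∀ i, 0 ≤ y i) (hy1 : ∀ i, y i ≤ 1 / 5) :
    ∀ (r : ℕ) (S : Finset (Fin n)), (r : ℝ) / 5 < ∑ i ∈ S, y i →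
      (r.factorial : ℝ) / 5 ^ r ≤ nest y r S
  | 0, S, _ => by simp [nest]
  | r + 1, S, h => by
    have key : ∀ i ∈ S, (r.factorial : ℝ) / 5 ^ r ≤ nest y r (S.erase i) := by
      intro i hi
      apply nest_lower hy0 hy1
      rw [Finset.sum_erase_eq_sub hi]
      have h1 := hy1 i
      push_cast at h ⊢
      linarith
    have hsumpos : ((r : ℝ) + 1) / 5 ≤ ∑ i ∈ S, y i := by push_cast at h; linarith
    calc ((r + 1).factorial : ℝ) / 5 ^ (r + 1)
        = ((r : ℝ) + 1) / 5 * ((r.factorial : ℝ) / 5 ^ r) := by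
          push_cast [Nat.factorial_succ]; ring
      _ ≤ (∑ i ∈ S, y i) * ((r.factorial : ℝ) / 5 ^ r) := by
          apply mul_le_mul_of_nonneg_right hsumpos (by positivity)
      _ = ∑ i ∈ S, y i * ((r.factorial : ℝ) / 5 ^ r) := by rw [Finset.sum_mul]
      _ ≤ ∑ i ∈ S, y i * nest y r (S.erase i) :=
          Finset.sum_le_sum fun i hi => mul_le_mul_of_nonneg_left (key i hi) (hy0 i)
      _ = nest y (r + 1) S := rfl

lemma nest_ofReal {n : ℕ} {y : Fin n → ℝ} (hy : ∀ i, 0 ≤ y i) :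
    ∀ (r : ℕ) (S : Finset (Fin n)),
      ENNReal.ofReal (nest y r S) = nest (fun i => ENNReal.ofReal (y i)) r S
  | 0, _ => by simp [nest]
  | r + 1, S => by
    show ENNReal.ofReal (∑ i ∈ S, y i * nest y r (S.erase i))
        = ∑ i ∈ S, ENNReal.ofReal (y i) * nest (fun i => ENNReal.ofReal (y i)) r (S.erase i)
    rw [ENNReal.ofReal_sum_of_nonneg (fun i _ => mul_nonneg (hy i) (nest_nonneg hy r _))]
    exact Finset.sum_congr rfl fun i _ => by
      rw [ENNReal.ofReal_mul (hy i), nest_ofReal hy r]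

section Prob

variable {n m : ℕ} {Ω : Type} [MeasurableSpace Ω] {μ : Measure Ω} [IsProbabilityMeasure μ]
  {B : Fin n → Ω → Fin m} {b : Fin m}

lemma measurable_nest (hmeas : ∀ i, Measurable (B i)) (x : Fin n → ℝ) (b : Fin m) :
    ∀ (r : ℕ) (S : Finset (Fin n)),
      Measurable fun ω => nest (fun i => if B i ω = b then ENNReal.ofReal (x i) else 0) r S
  | 0, _ => by simp only [nest]; exact measurable_const
  | r + 1, S => by
    show Measurable fun ω => ∑ i ∈ S,
      (if B i ω = b then ENNReal.ofReal (x i) else 0) *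
        nest (fun i => if B i ω = b then ENNReal.ofReal (x i) else 0) r (S.erase i)
    apply Finset.measurable_sum
    intro i _
    exact ((Measurable.ite ((hmeas i) (measurableSet_singleton b)) measurable_const
      measurable_const)).mul (measurable_nest hmeas x b r (S.erase i))

lemma meas_biInter (hindep : iIndepFun B μ)
    (hunif : ∀ (i : Fin n) (b : Fin m), μ {ω | B i ω = b} = 1 / (m : ℝ≥0∞))
    (b : Fin m) (T : Finset (Fin n)) :
    μ (⋂ j ∈ T, B j ⁻¹' {b}) = ((m : ℝ≥0∞))⁻¹ ^ T.card := by
  rw [hindep.measure_inter_preimage_eq_mul T (sets := fun _ => {b})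
    (fun i _ => measurableSet_singleton b)]
  have : ∀ i, μ (B i ⁻¹' {b}) = ((m : ℝ≥0∞))⁻¹ := by
    intro i
    have := hunif i b
    rw [one_div] at this
    exact this
  simp [this]

lemma key_lintegral (hmeas : ∀ i, Measurable (B i)) (hindep : iIndepFun B μ)
    (hunif : ∀ (i : Fin n) (b : Fin m), μ {ω | B i ω = b} = 1 / (m : ℝ≥0∞))
    (b : Fin m) (x : Fin n → ℝ) :
    ∀ (r : ℕ) (S T : Finset (Fin n)), (∀ i ∈ S, i ∉ T) →
      ∫⁻ ω, (⋂ j ∈ T, B j ⁻¹' {b}).indicator 1 ω *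
          nest (fun i => if B i ω = b then ENNReal.ofReal (x i) else 0) r S ∂μ
        ≤ (∑ i, ENNReal.ofReal (x i)) ^ r * ((m : ℝ≥0∞))⁻¹ ^ (r + T.card)
  | 0, S, T, _ => by
    simp only [nest, mul_one, zero_add]
    rw [lintegral_indicator_one
      (T.measurableSet_biInter fun j _ => (hmeas j) (measurableSet_singleton b))]
    rw [pow_zero, one_mul, meas_biInter hindep hunif b T]
  | r + 1, S, T, hST => by
    have hTmeas : MeasurableSet (⋂ j ∈ T, B j ⁻¹' {b}) :=
      T.measurableSet_biInter fun j _ => (hmeas j) (measurableSet_singleton b)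
    have hstep : ∀ ω, (⋂ j ∈ T, B j ⁻¹' {b}).indicator 1 ω *
          nest (fun i => if B i ω = b then ENNReal.ofReal (x i) else 0) (r + 1) S
        = ∑ i ∈ S, ENNReal.ofReal (x i) *
            ((⋂ j ∈ insert i T, B j ⁻¹' {b}).indicator 1 ω *
              nest (fun i => if B i ω = b then ENNReal.ofReal (x i) else 0) r (S.erase i)) := by
      intro ω
      show (⋂ j ∈ T, B j ⁻¹' {b}).indicator 1 ω * ∑ i ∈ S, _ = _
      rw [Finset.mul_sum]
      refine Finset.sum_congr rfl fun i _ => ?_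
      have hins : ω ∈ ⋂ j ∈ insert i T, B j ⁻¹' {b} ↔
          B i ω = b ∧ ω ∈ ⋂ j ∈ T, B j ⁻¹' {b} := by
        simp [Set.mem_iInter]
      by_cases h1 : B i ω = b <;> by_cases h2 : ω ∈ ⋂ j ∈ T, B j ⁻¹' {b} <;>
        simp [Set.indicator_apply, hins, h1, h2] <;> ring
    calc ∫⁻ ω, (⋂ j ∈ T, B j ⁻¹' {b}).indicator 1 ω *
          nest (fun i => if B i ω = b then ENNReal.ofReal (x i) else 0) (r + 1) S ∂μ
        = ∫⁻ ω, ∑ i ∈ S, ENNReal.ofReal (x i) *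
            ((⋂ j ∈ insert i T, B j ⁻¹' {b}).indicator 1 ω *
              nest (fun i => if B i ω = b then ENNReal.ofReal (x i) else 0) r (S.erase i)) ∂μ := by
          exact lintegral_congr hstep
      _ = ∑ i ∈ S, ∫⁻ ω, ENNReal.ofReal (x i) *
            ((⋂ j ∈ insert i T, B j ⁻¹' {b}).indicator 1 ω *
              nest (fun i => if B i ω = b then ENNReal.ofReal (x i) else 0) r (S.erase i)) ∂μ := by
          apply lintegral_finset_sum
          intro i _
          exact measurable_const.mul
            (((measurable_one.indicator ((insert i T).measurableSet_biInter
              fun j _ => (hmeas j) (measurableSet_singleton b)))).mul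
              (measurable_nest hmeas x b r (S.erase i)))
      _ ≤ ∑ i ∈ S, ENNReal.ofReal (x i) *
            ((∑ j, ENNReal.ofReal (x j)) ^ r * ((m : ℝ≥0∞))⁻¹ ^ (r + (insert i T).card)) := by
          apply Finset.sum_le_sum
          intro i hi
          rw [lintegral_const_mul' _ _ ENNReal.ofReal_ne_top]
          apply mul_le_mul_right
          apply key_lintegral hmeas hindep hunif b x r (S.erase i) (insert i T)
          intro j hj
          simp only [Finset.mem_insert, not_or]
          exact ⟨Finset.ne_of_mem_erase hj, hST j (Finset.mem_of_mem_erase hj)⟩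
      _ ≤ (∑ i, ENNReal.ofReal (x i)) ^ (r + 1) * ((m : ℝ≥0∞))⁻¹ ^ (r + 1 + T.card) := by
          have hcard : ∀ i ∈ S, (insert i T).card = T.card + 1 := fun i hi =>
            Finset.card_insert_of_notMem (hST i hi)
          calc ∑ i ∈ S, ENNReal.ofReal (x i) *
                ((∑ j, ENNReal.ofReal (x j)) ^ r * ((m : ℝ≥0∞))⁻¹ ^ (r + (insert i T).card))
              = ∑ i ∈ S, ENNReal.ofReal (x i) *
                ((∑ j, ENNReal.ofReal (x j)) ^ r * ((m : ℝ≥0∞))⁻¹ ^ (r + 1 + T.card)) := by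
                refine Finset.sum_congr rfl fun i hi => ?_
                rw [hcard i hi]
                ring_nf
            _ = (∑ i ∈ S, ENNReal.ofReal (x i)) *
                ((∑ j, ENNReal.ofReal (x j)) ^ r * ((m : ℝ≥0∞))⁻¹ ^ (r + 1 + T.card)) := by
                rw [Finset.sum_mul]
            _ ≤ (∑ i, ENNReal.ofReal (x i)) *
                ((∑ j, ENNReal.ofReal (x j)) ^ r * ((m : ℝ≥0∞))⁻¹ ^ (r + 1 + T.card)) := by
                exact mul_le_mul_left (Finset.sum_le_sum_of_subset (Finset.subset_univ S)) _
            _ = (∑ i, ENNReal.ofReal (x i)) ^ (r + 1) * ((m : ℝ≥0∞))⁻¹ ^ (r + 1 + T.card) := by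
                rw [pow_succ]
                ring

end Prob

end Statement9Aux

theorem statement9 (k m n : ℕ) (hk : 2 ≤ k) (hm : 2 ^ 11 * k ^ 4 ≤ m)
    (x : Fin n → ℝ) (hx : ∀ i, 0 ≤ x i ∧ x i ≤ 1 / 5)
    (hsum : ∑ i, x i ≤ (k : ℝ))
    (Ω : Type) [MeasurableSpace Ω] (μ : Measure Ω) [IsProbabilityMeasure μ]
    (B : Fin n → Ω → Fin m)
    (hmeas : ∀ i, Measurable (B i))
    (hindep : iIndepFun B μ)
    (hunif : ∀ (i : Fin n) (b : Fin m), μ {ω | B i ω = b} = 1 / (m : ℝ≥0∞)) :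
    μ {ω | ∃ b : Fin m,
        (4 : ℝ) / 5 < ∑ i ∈ Finset.univ.filter (fun i => B i ω = b), x i}
      ≤ 1 / (m : ℝ≥0∞) := by
  classical
  have hkpos : 0 < 2 ^ 11 * k ^ 4 := by
    have : 0 < k := by omega
    positivity
  have hmpos : 0 < m := lt_of_lt_of_le hkpos hm
  have hm0 : (m : ℝ≥0∞) ≠ 0 := by
    simpa using hmpos.ne'
  have hmtop : (m : ℝ≥0∞) ≠ ⊤ := ENNReal.natCast_ne_top m
  have hc0 : (0:ℝ) < 24 / 625 := by norm_num
  set c : ℝ≥0∞ := ENNReal.ofReal (24 / 625) with hc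
  have hC : (∑ i, ENNReal.ofReal (x i)) ≤ (k : ℝ≥0∞) := by
    rw [← ENNReal.ofReal_sum_of_nonneg (fun i _ => (hx i).1)]
    calc ENNReal.ofReal (∑ i, x i) ≤ ENNReal.ofReal k := ENNReal.ofReal_le_ofReal hsum
      _ = (k : ℝ≥0∞) := ENNReal.ofReal_natCast k
  have hEb : ∀ b : Fin m,
      μ {ω | (4 : ℝ) / 5 < ∑ i ∈ Finset.univ.filter (fun i => B i ω = b), x i}
        ≤ 32 * (k : ℝ≥0∞) ^ 4 * ((m : ℝ≥0∞))⁻¹ ^ 4 := by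
    intro b
    set f : Ω → ℝ≥0∞ := fun ω =>
      Statement9Aux.nest (fun i => if B i ω = b then ENNReal.ofReal (x i) else 0) 4
        Finset.univ with hf
    have hfmeas : Measurable f := Statement9Aux.measurable_nest hmeas x b 4 Finset.univ
    have hsub : {ω | (4 : ℝ) / 5 < ∑ i ∈ Finset.univ.filter (fun i => B i ω = b), x i}
        ⊆ {ω | c ≤ f ω} := by
      intro ω hω
      simp only [Set.mem_setOf_eq] at hω ⊢
      set y : Fin n → ℝ := fun i => if B i ω = b then x i else 0 with hy
      have hy0 : ∀ i, 0 ≤ y i := by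
        intro i
        show 0 ≤ if B i ω = b then x i else 0
        by_cases h : B i ω = b
        · rw [if_pos h]; exact (hx i).1
        · rw [if_neg h]
      have hy1 : ∀ i, y i ≤ 1 / 5 := by
        intro i
        show (if B i ω = b then x i else 0) ≤ 1 / 5
        by_cases h : B i ω = b
        · rw [if_pos h]; exact (hx i).2
        · rw [if_neg h]; norm_num
      have hsy : (4 : ℝ) / 5 < ∑ i, y i := by
        rw [Finset.sum_filter] at hω
        exact hω
      have hlow := Statement9Aux.nest_lower hy0 hy1 4 Finset.univ (by push_cast; linarith)
      have h24 : (24 : ℝ) / 625 ≤ Statement9Aux.nest y 4 Finset.univ := by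
        have hfac : ((Nat.factorial 4 : ℝ)) / 5 ^ 4 = 24 / 625 := by
          norm_num [Nat.factorial]
        linarith [hlow, hfac.ge, hfac.le]
      calc c = ENNReal.ofReal (24 / 625) := rfl
        _ ≤ ENNReal.ofReal (Statement9Aux.nest y 4 Finset.univ) :=
            ENNReal.ofReal_le_ofReal h24
        _ = Statement9Aux.nest (fun i => ENNReal.ofReal (y i)) 4 Finset.univ :=
            Statement9Aux.nest_ofReal hy0 4 _
        _ = f ω := by
            rw [hf]
            congr 1
            funext i
            by_cases h : B i ω = b <;> simp [hy, h]
    have hlint : ∫⁻ ω, f ω ∂μ ≤ (k : ℝ≥0∞) ^ 4 * ((m : ℝ≥0∞))⁻¹ ^ 4 := by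
      have h0 := Statement9Aux.key_lintegral hmeas hindep hunif b x 4 Finset.univ ∅
        (by simp)
      simp only [Finset.notMem_empty, Set.iInter_of_empty, Set.iInter_univ,
        Set.indicator_univ, Pi.one_apply, one_mul, Finset.card_empty, add_zero] at h0
      exact le_trans h0 (by gcongr)
    calc μ {ω | (4 : ℝ) / 5 < ∑ i ∈ Finset.univ.filter (fun i => B i ω = b), x i}
        ≤ μ {ω | c ≤ f ω} := measure_mono hsub
      _ ≤ (∫⁻ ω, f ω ∂μ) / c :=
          meas_ge_le_lintegral_div hfmeas.aemeasurable
            (by simpa [hc] using (ENNReal.ofReal_pos.2 hc0).ne') ENNReal.ofReal_ne_top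
      _ = (∫⁻ ω, f ω ∂μ) * c⁻¹ := div_eq_mul_inv _ _
      _ ≤ ((k : ℝ≥0∞) ^ 4 * ((m : ℝ≥0∞))⁻¹ ^ 4) * 32 := by
          apply mul_le_mul' hlint
          rw [hc, ← ENNReal.ofReal_inv_of_pos hc0]
          calc ENNReal.ofReal (24 / 625 : ℝ)⁻¹ ≤ ENNReal.ofReal 32 :=
              ENNReal.ofReal_le_ofReal (by norm_num)
            _ = 32 := by
              rw [ENNReal.ofReal_ofNat]
      _ = 32 * (k : ℝ≥0∞) ^ 4 * ((m : ℝ≥0∞))⁻¹ ^ 4 := by ring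
  have hset : {ω | ∃ b : Fin m,
      (4 : ℝ) / 5 < ∑ i ∈ Finset.univ.filter (fun i => B i ω = b), x i}
      = ⋃ b : Fin m, {ω | (4 : ℝ) / 5 < ∑ i ∈ Finset.univ.filter (fun i => B i ω = b), x i} :=
    Set.setOf_exists _
  rw [hset, one_div]
  have hk2 : (32 * (k : ℝ≥0∞) ^ 4) ≤ (m : ℝ≥0∞) ^ 2 := by
    have hnat : 32 * k ^ 4 ≤ m ^ 2 := by nlinarith
    calc (32 * (k : ℝ≥0∞) ^ 4) = ((32 * k ^ 4 : ℕ) : ℝ≥0∞) := by push_cast; ring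
      _ ≤ ((m ^ 2 : ℕ) : ℝ≥0∞) := Nat.cast_le.2 hnat
      _ = (m : ℝ≥0∞) ^ 2 := by push_cast; ring
  calc μ (⋃ b : Fin m, {ω | (4 : ℝ) / 5 < ∑ i ∈ Finset.univ.filter (fun i => B i ω = b), x i})
      ≤ ∑' b : Fin m, μ {ω | (4 : ℝ) / 5 < ∑ i ∈ Finset.univ.filter (fun i => B i ω = b), x i} :=
        measure_iUnion_le _
    _ ≤ ∑' _b : Fin m, 32 * (k : ℝ≥0∞) ^ 4 * ((m : ℝ≥0∞))⁻¹ ^ 4 := ENNReal.tsum_le_tsum hEb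
    _ = (m : ℝ≥0∞) * (32 * (k : ℝ≥0∞) ^ 4 * ((m : ℝ≥0∞))⁻¹ ^ 4) := by
        rw [tsum_fintype]
        simp [Finset.sum_const, Fintype.card_fin, nsmul_eq_mul]
    _ = (32 * (k : ℝ≥0∞) ^ 4) * (((m : ℝ≥0∞)) * ((m : ℝ≥0∞))⁻¹ * ((m : ℝ≥0∞))⁻¹ ^ 3) := by
        ring
    _ = (32 * (k : ℝ≥0∞) ^ 4) * ((m : ℝ≥0∞))⁻¹ ^ 3 := by
        rw [ENNReal.mul_inv_cancel hm0 hmtop, one_mul]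
    _ ≤ (m : ℝ≥0∞) ^ 2 * ((m : ℝ≥0∞))⁻¹ ^ 3 := mul_le_mul_left hk2 _
    _ = ((m : ℝ≥0∞) * ((m : ℝ≥0∞))⁻¹) ^ 2 * ((m : ℝ≥0∞))⁻¹ := by ring
    _ = ((m : ℝ≥0∞))⁻¹ := by
        rw [ENNReal.mul_inv_cancel hm0 hmtop, one_pow, one_mul]
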